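/- Let Z ⊂ Q be a projective subvariety of the smooth quadric hypersurface Q ⊂ ℙ⁵ (identified with its dual via the nondegenerate quadratic form). Then: (1) Z ⊆ Z^∨, where Z^∨ is the projective dual variety of Z under this identification; and (2) Z^∨ ⊆ Q if and only if Z = Z^∨. -/

import Mathlib

noncomputable section

/-- The (cone over the) projective dual variety of a cone `Z ⊆ ℂ⁶`, with respect to the
identification of `ℙ⁵` with its dual space given by a bilinear form `B`: the closure of
the set of points `w` such that the hyperplane `w^⊥` contains the tangent cone of `Z`
at some nonzero point of `Z`. -/
def dualVariety (B : LinearMap.BilinForm ℂ (Fin 6 → ℂ)) (Z : Set (Fin 6 → ℂ)) :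
    Set (Fin 6 → ℂ) :=
  closure {w | ∃ v ∈ Z, v ≠ 0 ∧ ∀ u ∈ tangentConeAt ℂ Z v, B u w = 0}

open Filter Topology

private lemma bform_continuous (B : LinearMap.BilinForm ℂ (Fin 6 → ℂ)) :
    Continuous fun p : (Fin 6 → ℂ) × (Fin 6 → ℂ) => B p.1 p.2 := by
  let B' : (Fin 6 → ℂ) →ₗ[ℂ] ((Fin 6 → ℂ) →L[ℂ] ℂ) :=
    (LinearMap.toContinuousLinearMap.toLinearMap).comp B
  have h1 : Continuous B' := B'.continuous_of_finiteDimensional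
  have heq : (fun p : (Fin 6 → ℂ) × (Fin 6 → ℂ) => B p.1 p.2)
      = fun p => (B' p.1) p.2 := rfl
  rw [heq]
  exact isBoundedBilinearMap_apply.continuous.comp
    ((h1.comp continuous_fst).prodMk continuous_snd)

private lemma subset_dual (B : LinearMap.BilinForm ℂ (Fin 6 → ℂ))
    (hsymm : ∀ v w, B v w = B w v)
    (S : Set (Fin 6 → ℂ)) (hSQ : S ⊆ {v | B v v = 0})
    (hSne : ∃ v ∈ S, v ≠ 0) : S ⊆ dualVariety B S := by
  intro x hx
  apply subset_closure
  by_cases hx0 : x = 0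
  · obtain ⟨v, hv, hv0⟩ := hSne
    exact ⟨v, hv, hv0, fun u _ => by simp [hx0]⟩
  · refine ⟨x, hx, hx0, ?_⟩
    intro u hu
    obtain ⟨c, d, hd0', hmem, hcd⟩ := mem_tangentConeAt_iff_exists_seq.mp hu
    have hd0 : Tendsto d atTop (𝓝 0) := hd0'
    have hcont := bform_continuous B
    have hf : Tendsto (fun n => B (c n • d n) x) atTop (𝓝 (B u x)) := by
      have := (hcont.tendsto (u, x)).comp (hcd.prodMk_nhds tendsto_const_nhds)
      exact this
    have hg : Tendsto (fun n => -(1/2 : ℂ) * B (c n • d n) (d n)) atTop (𝓝 0) := by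
      have h2 : Tendsto (fun n => B (c n • d n) (d n)) atTop (𝓝 (B u 0)) := by
        have := (hcont.tendsto (u, 0)).comp (hcd.prodMk_nhds hd0)
        exact this
      simpa using (tendsto_const_nhds (x := -(1/2 : ℂ))).mul h2
    have heq : ∀ᶠ n in atTop, B (c n • d n) x = -(1/2 : ℂ) * B (c n • d n) (d n) := by
      filter_upwards [hmem] with n hn
      have h1 : B (x + d n) (x + d n) = 0 := hSQ hn
      have h2 : B x x = 0 := hSQ hx
      have h3 : B x (d n) = B (d n) x := hsymm _ _
      simp only [map_add, LinearMap.add_apply] at h1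
      rw [h2, h3] at h1
      have hexp : B (d n) x = -(1/2 : ℂ) * B (d n) (d n) := by
        linear_combination (1/2 : ℂ) * h1
      simp only [map_smul, LinearMap.smul_apply, smul_eq_mul]
      rw [hexp]; ring
    have hg' : Tendsto (fun n => B (c n • d n) x) atTop (𝓝 0) :=
      Filter.Tendsto.congr' (Filter.EventuallyEq.symm heq) hg
    exact tendsto_nhds_unique hf hg'

/-- let `Q ⊂ ℙ⁵` be the smooth quadric defined by a nondegenerate
symmetric bilinear form `B` (used to identify `ℙ⁵` with its dual), and let `Z ⊆ Q` be a
projective subvariety (a nonempty closed cone contained in the cone of `Q`), for which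
biduality `(Z^∨)^∨ = Z` holds. Then (1) `Z ⊆ Z^∨`, and (2) `Z^∨ ⊆ Q ↔ Z = Z^∨`. -/
theorem stmt19 (B : LinearMap.BilinForm ℂ (Fin 6 → ℂ))
    (hsymm : ∀ v w, B v w = B w v)
    (hnondeg : ∀ v, (∀ w, B v w = 0) → v = 0)
    (Z : Set (Fin 6 → ℂ))
    (hZcone : ∀ (c : ℂ), ∀ v ∈ Z, c • v ∈ Z)
    (hZclosed : IsClosed Z)
    (hZne : ∃ v ∈ Z, v ≠ 0)
    (hZQ : Z ⊆ {v | B v v = 0})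
    (hbidual : dualVariety B (dualVariety B Z) = Z) :
    Z ⊆ dualVariety B Z ∧
      (dualVariety B Z ⊆ {v | B v v = 0} ↔ Z = dualVariety B Z) := by
  have part1 : Z ⊆ dualVariety B Z := subset_dual B hsymm Z hZQ hZne
  refine ⟨part1, ?_, ?_⟩
  · intro h
    obtain ⟨v, hv, hv0⟩ := hZne
    have h2 : dualVariety B Z ⊆ dualVariety B (dualVariety B Z) :=
      subset_dual B hsymm _ h ⟨v, part1 hv, hv0⟩
    rw [hbidual] at h2
    exact Set.Subset.antisymm part1 h2
  · intro h; rw [← h]; exact hZQ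

end
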